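/- arXiv:1405.7112 — 4 statements merged into one kernel-verified Lean document; each statement's English description precedes it below -/
import Mathlib

section
/- Fix integers n ≥ k ≥ 1 and let y₁,…,y_k be the first k rows of a Haar-random n×n orthogonal matrix. Let μ be a probability measure on ℝ^k (a distribution of weights w = (w₁,…,w_k), drawn independently of the orthogonal matrix) with finite second moments such that E_μ[Σᵢ wᵢ] = n. Then for every n×n real matrix A, E_{μ × Haar}[(Σᵢ wᵢ yᵢᵀ A yᵢ)²] ≥ E_{Haar}[(Σᵢ (n/k) yᵢᵀ A yᵢ)²]. -/
open MeasureTheory Matrix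

noncomputable instance matrixMeasurableSpace (n : ℕ) :
    MeasurableSpace (Matrix (Fin n) (Fin n) ℝ) :=
  inferInstanceAs (MeasurableSpace (Fin n → Fin n → ℝ))

def IsHaarProb (n : ℕ) (μ : Measure (Matrix.orthogonalGroup (Fin n) ℝ)) : Prop :=
  IsProbabilityMeasure μ ∧
    ∀ g : Matrix.orthogonalGroup (Fin n) ℝ, μ.map (fun x => g * x) = μ

namespace Stmt1Aux

def permMat (n : ℕ) (σ : Equiv.Perm (Fin n)) : Matrix (Fin n) (Fin n) ℝ :=
  Matrix.of fun i j => if σ i = j then 1 else 0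

lemma permMat_mul {n : ℕ} (σ : Equiv.Perm (Fin n)) (M : Matrix (Fin n) (Fin n) ℝ) (i : Fin n) :
    (permMat n σ * M) i = M (σ i) := by
  funext j
  simp [permMat, Matrix.mul_apply]

lemma permMat_mem {n : ℕ} (σ : Equiv.Perm (Fin n)) :
    permMat n σ ∈ Matrix.orthogonalGroup (Fin n) ℝ := by
  rw [Matrix.mem_orthogonalGroup_iff]
  ext i j
  simp [permMat, Matrix.mul_apply, Matrix.star_eq_conjTranspose, Matrix.conjTranspose_apply,
    Matrix.one_apply, ite_and, σ.injective.eq_iff, eq_comm]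

lemma measurable_mul_left {n : ℕ} (g : Matrix.orthogonalGroup (Fin n) ℝ) :
    Measurable (fun U : Matrix.orthogonalGroup (Fin n) ℝ => g * U) := by
  have h : Measurable (fun U : Matrix.orthogonalGroup (Fin n) ℝ =>
      ((g : Matrix (Fin n) (Fin n) ℝ) * (U : Matrix (Fin n) (Fin n) ℝ))) := by
    apply measurable_pi_lambda; intro i; apply measurable_pi_lambda; intro j
    simp only [Matrix.mul_apply]
    exact Finset.measurable_sum _ fun l _ =>
      measurable_const.mul ((measurable_pi_apply j).comp
        ((measurable_pi_apply l).comp measurable_subtype_coe))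
  exact h.subtype_mk

lemma integral_inv {n : ℕ} {haar : Measure (Matrix.orthogonalGroup (Fin n) ℝ)}
    (hh : IsHaarProb n haar) (g : Matrix.orthogonalGroup (Fin n) ℝ)
    (F : Matrix.orthogonalGroup (Fin n) ℝ → ℝ) (hF : AEStronglyMeasurable F haar) :
    ∫ U, F (g * U) ∂haar = ∫ U, F U ∂haar := by
  conv_rhs => rw [← hh.2 g]
  rw [integral_map (measurable_mul_left g).aemeasurable (by rwa [hh.2 g])]


variable {n : ℕ} (A : Matrix (Fin n) (Fin n) ℝ)

/-- the quadratic form of row `i`. -/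
def fA (A : Matrix (Fin n) (Fin n) ℝ) (U : Matrix.orthogonalGroup (Fin n) ℝ) (i : Fin n) : ℝ :=
  (U : Matrix (Fin n) (Fin n) ℝ) i ⬝ᵥ A.mulVec ((U : Matrix (Fin n) (Fin n) ℝ) i)

def BB (A : Matrix (Fin n) (Fin n) ℝ) : ℝ := ∑ a : Fin n, ∑ b : Fin n, |A a b|

lemma BB_nonneg : 0 ≤ BB A :=
  Finset.sum_nonneg fun _ _ => Finset.sum_nonneg fun _ _ => abs_nonneg _

lemma fA_eq (U : Matrix.orthogonalGroup (Fin n) ℝ) (i : Fin n) :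
    fA A U i = ∑ a : Fin n, ∑ b : Fin n,
      (U : Matrix (Fin n) (Fin n) ℝ) i a * (A a b * (U : Matrix (Fin n) (Fin n) ℝ) i b) := by
  simp [fA, dotProduct, Matrix.mulVec, Finset.mul_sum]

lemma row_abs_le_one (U : Matrix.orthogonalGroup (Fin n) ℝ) (i a : Fin n) :
    |(U : Matrix (Fin n) (Fin n) ℝ) i a| ≤ 1 := by
  have h := U.2
  rw [Matrix.mem_orthogonalGroup_iff] at h
  have h1 : ∑ c : Fin n, (U : Matrix (Fin n) (Fin n) ℝ) i c * (U : Matrix (Fin n) (Fin n) ℝ) i c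
      = 1 := by
    have := congrFun (congrFun h i) i
    simpa [Matrix.mul_apply, Matrix.one_apply, Matrix.star_eq_conjTranspose,
      Matrix.conjTranspose_apply] using this
  rw [← sq_le_one_iff_abs_le_one]
  calc ((U : Matrix (Fin n) (Fin n) ℝ) i a) ^ 2
      ≤ ∑ c : Fin n, ((U : Matrix (Fin n) (Fin n) ℝ) i c) ^ 2 :=
        Finset.single_le_sum (f := fun c => ((U : Matrix (Fin n) (Fin n) ℝ) i c) ^ 2)
          (fun c _ => sq_nonneg _) (Finset.mem_univ a)
    _ = 1 := by simpa [pow_two] using h1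

lemma fA_abs_le (U : Matrix.orthogonalGroup (Fin n) ℝ) (i : Fin n) : |fA A U i| ≤ BB A := by
  rw [fA_eq]
  calc |∑ a : Fin n, ∑ b : Fin n, (U : Matrix (Fin n) (Fin n) ℝ) i a *
          (A a b * (U : Matrix (Fin n) (Fin n) ℝ) i b)|
      ≤ ∑ a : Fin n, |∑ b : Fin n, (U : Matrix (Fin n) (Fin n) ℝ) i a *
          (A a b * (U : Matrix (Fin n) (Fin n) ℝ) i b)| := Finset.abs_sum_le_sum_abs _ _
    _ ≤ ∑ a : Fin n, ∑ b : Fin n, |((U : Matrix (Fin n) (Fin n) ℝ) i a *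
          (A a b * (U : Matrix (Fin n) (Fin n) ℝ) i b))| :=
        Finset.sum_le_sum fun a _ => Finset.abs_sum_le_sum_abs _ _
    _ ≤ BB A := by
        refine Finset.sum_le_sum fun a _ => Finset.sum_le_sum fun b _ => ?_
        rw [abs_mul, abs_mul]
        calc |(U : Matrix (Fin n) (Fin n) ℝ) i a| * (|A a b| * |(U : Matrix (Fin n) (Fin n) ℝ) i b|)
            ≤ 1 * (|A a b| * 1) := by
              have h1 := row_abs_le_one U i a
              have h2 := row_abs_le_one U i b
              have h3 := abs_nonneg ((U : Matrix (Fin n) (Fin n) ℝ) i a)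
              have h4 := abs_nonneg ((U : Matrix (Fin n) (Fin n) ℝ) i b)
              have h5 := abs_nonneg (A a b)
              nlinarith [mul_le_mul h1 (mul_le_mul_of_nonneg_left h2 h5) (by positivity) zero_le_one]
          _ = |A a b| := by ring

lemma fA_measurable (i : Fin n) : Measurable (fun U => fA A U i) := by
  have : ∀ c : Fin n, Measurable
      (fun U : Matrix.orthogonalGroup (Fin n) ℝ => (U : Matrix (Fin n) (Fin n) ℝ) i c) :=
    fun c => (measurable_pi_apply c).comp ((measurable_pi_apply i).comp measurable_subtype_coe)
  simp only [fA_eq]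
  exact Finset.measurable_sum _ fun a _ => Finset.measurable_sum _ fun b _ =>
    (this a).mul (measurable_const.mul (this b))

lemma fA_mul_integrable (haar : Measure (Matrix.orthogonalGroup (Fin n) ℝ))
    [IsProbabilityMeasure haar] (i j : Fin n) :
    Integrable (fun U => fA A U i * fA A U j) haar := by
  refine (integrable_const (BB A * BB A)).mono'
    ((fA_measurable A i).mul (fA_measurable A j)).aestronglyMeasurable (ae_of_all _ fun U => ?_)
  rw [Real.norm_eq_abs, abs_mul]
  exact mul_le_mul (fA_abs_le A U i) (fA_abs_le A U j) (abs_nonneg _) (BB_nonneg A)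




/- [aux + part2 inserted here in final file] -/

section C
variable {n : ℕ} (A : Matrix (Fin n) (Fin n) ℝ)
  (haar : Measure (Matrix.orthogonalGroup (Fin n) ℝ))

noncomputable def CC (A : Matrix (Fin n) (Fin n) ℝ) (haar : Measure (Matrix.orthogonalGroup (Fin n) ℝ))
    (i j : Fin n) : ℝ := ∫ U, fA A U i * fA A U j ∂haar

lemma fA_perm (σ : Equiv.Perm (Fin n)) (U : Matrix.orthogonalGroup (Fin n) ℝ) (i : Fin n) :
    fA A ((⟨permMat n σ, permMat_mem σ⟩ : Matrix.orthogonalGroup (Fin n) ℝ) * U) i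
      = fA A U (σ i) := by
  have hcoe : (((⟨permMat n σ, permMat_mem σ⟩ : Matrix.orthogonalGroup (Fin n) ℝ) * U :
      Matrix.orthogonalGroup (Fin n) ℝ) : Matrix (Fin n) (Fin n) ℝ)
      = permMat n σ * (U : Matrix (Fin n) (Fin n) ℝ) := rfl
  simp only [fA, hcoe, permMat_mul]

lemma CC_perm (hh : IsHaarProb n haar) (σ : Equiv.Perm (Fin n)) (i j : Fin n) :
    CC A haar (σ i) (σ j) = CC A haar i j := by
  have key := integral_inv hh (⟨permMat n σ, permMat_mem σ⟩ : Matrix.orthogonalGroup (Fin n) ℝ)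
    (fun U => fA A U i * fA A U j)
    ((fA_measurable A i).mul (fA_measurable A j)).aestronglyMeasurable
  simp only [fA_perm] at key
  simpa [CC] using key

lemma CC_diag (hh : IsHaarProb n haar) (i j : Fin n) : CC A haar i i = CC A haar j j := by
  simpa using CC_perm A haar hh (Equiv.swap i j) j j

lemma CC_off (hh : IsHaarProb n haar) {i j i' j' : Fin n} (hij : i ≠ j) (hij' : i' ≠ j') :
    CC A haar i j = CC A haar i' j' := by
  -- build σ with σ i' = i, σ j' = j
  set t := Equiv.swap i' i j' with ht
  set σ := (Equiv.swap i' i).trans (Equiv.swap t j) with hσ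
  have hti : i ≠ t := by
    rcases eq_or_ne j' i with h | h
    · have h2 : t = i' := by rw [ht, h, Equiv.swap_apply_right]
      rw [h2, ← h]
      exact fun hc => hij' hc.symm
    · have h2 : t = j' := Equiv.swap_apply_of_ne_of_ne hij'.symm h
      rw [h2]
      exact fun hc => h hc.symm
  have h1 : σ i' = i := by
    rw [hσ]
    simp only [Equiv.trans_apply, Equiv.swap_apply_left]
    exact Equiv.swap_apply_of_ne_of_ne hti hij
  have h2 : σ j' = j := by
    rw [hσ]
    simp only [Equiv.trans_apply]
    rw [show Equiv.swap i' i j' = t from rfl, Equiv.swap_apply_left]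
  calc CC A haar i j = CC A haar (σ i') (σ j') := by rw [h1, h2]
    _ = CC A haar i' j' := CC_perm A haar hh σ i' j'

end C

end Stmt1Aux
section Main
open Stmt1Aux

set_option maxHeartbeats 2000000 in
set_option synthInstance.maxHeartbeats 1000000 in
/-- Let `y₁,…,y_k` be the first `k` rows of a Haar-random `n×n` orthogonal matrix, and let
`μ` be a distribution of weights `w ∈ ℝ^k` (independent of the orthogonal matrix) with
finite second moments and `E[Σᵢ wᵢ] = n`.  Then for every `n×n` real matrix `A`,
`E[(Σᵢ wᵢ yᵢᵀAyᵢ)²] ≥ E[(Σᵢ (n/k) yᵢᵀAyᵢ)²]`. -/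
theorem stmt1 (n k : ℕ) (hk : 1 ≤ k) (hkn : k ≤ n)
    (haar : Measure (Matrix.orthogonalGroup (Fin n) ℝ)) (hhaar : IsHaarProb n haar)
    (μ : Measure (Fin k → ℝ)) [IsProbabilityMeasure μ]
    (hmom : ∀ i : Fin k, MemLp (fun w : Fin k → ℝ => w i) 2 μ)
    (hmean : (∫ w : Fin k → ℝ, ∑ i, w i ∂μ) = (n : ℝ))
    (A : Matrix (Fin n) (Fin n) ℝ) :
    (∫ p : (Fin k → ℝ) × Matrix.orthogonalGroup (Fin n) ℝ,
        (∑ i : Fin k, p.1 i *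
          ((p.2 : Matrix (Fin n) (Fin n) ℝ) (Fin.castLE hkn i) ⬝ᵥ
            A.mulVec ((p.2 : Matrix (Fin n) (Fin n) ℝ) (Fin.castLE hkn i)))) ^ 2
        ∂(μ.prod haar)) ≥
      ∫ U : Matrix.orthogonalGroup (Fin n) ℝ,
        (∑ i : Fin k, (n : ℝ) / k *
          ((U : Matrix (Fin n) (Fin n) ℝ) (Fin.castLE hkn i) ⬝ᵥ
            A.mulVec ((U : Matrix (Fin n) (Fin n) ℝ) (Fin.castLE hkn i)))) ^ 2 ∂haar := by
  haveI hPh : IsProbabilityMeasure haar := hhaar.1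
  haveI hSF : SFinite haar := inferInstanceAs (SFinite haar)
  have hn : 0 < n := lt_of_lt_of_le hk hkn
  set d0 : Fin n := ⟨0, hn⟩ with hd0
  set ci : Fin k → Fin n := Fin.castLE hkn with hci
  have hfA_def : ∀ (U : Matrix.orthogonalGroup (Fin n) ℝ) (i : Fin n),
      ((U : Matrix (Fin n) (Fin n) ℝ) i ⬝ᵥ A.mulVec ((U : Matrix (Fin n) (Fin n) ℝ) i))
        = fA A U i := fun _ _ => rfl
  simp only [hfA_def]
  obtain ⟨a, ha⟩ : ∃ a : ℝ, a = CC A haar d0 d0 := ⟨_, rfl⟩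
  -- diagonal values
  have hCdiag : ∀ i : Fin n, CC A haar i i = a := fun i => ha ▸ CC_diag A haar hhaar i d0
  -- off-diagonal value
  obtain ⟨b, hba, hCoff⟩ : ∃ b : ℝ, b ≤ a ∧ ∀ i j : Fin n, i ≠ j → CC A haar i j = b := by
    rcases lt_or_ge 1 n with h1n | h1n
    · set d1 : Fin n := ⟨1, h1n⟩ with hd1
      have hne : d0 ≠ d1 := by simp [hd0, hd1, Fin.ext_iff]
      refine ⟨CC A haar d0 d1, ?_, fun i j hij => CC_off A haar hhaar hij hne⟩
      have hI00 := fA_mul_integrable A haar d0 d0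
      have hI01 := fA_mul_integrable A haar d0 d1
      have hI11 := fA_mul_integrable A haar d1 d1
      have key : 0 ≤ ∫ U, (fA A U d0 - fA A U d1) ^ 2 ∂haar :=
        integral_nonneg fun U => sq_nonneg _
      have hx : (fun U => (fA A U d0 - fA A U d1) ^ 2)
          = fun U => (fA A U d0 * fA A U d0 - 2 * (fA A U d0 * fA A U d1))
            + fA A U d1 * fA A U d1 := funext fun U => by ring
      have hI' : Integrable
          (fun U => fA A U d0 * fA A U d0 - 2 * (fA A U d0 * fA A U d1)) haar :=
        hI00.sub (hI01.const_mul 2)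
      have hI2 : Integrable (fun U => 2 * (fA A U d0 * fA A U d1)) haar := hI01.const_mul 2
      rw [hx, integral_add hI' hI11, integral_sub hI00 hI2, integral_const_mul] at key
      have e00 : (∫ U, fA A U d0 * fA A U d0 ∂haar) = a := hCdiag d0
      have e11 : (∫ U, fA A U d1 * fA A U d1 ∂haar) = a := hCdiag d1
      have e01 : (∫ U, fA A U d0 * fA A U d1 ∂haar) = CC A haar d0 d1 := rfl
      rw [e00, e11, e01] at key
      linarith
    · refine ⟨a, le_refl _, fun i j hij => absurd ?_ hij⟩
      have hi := i.2; have hj := j.2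
      apply Fin.ext; omega
  -- structure of CC on the first k rows
  have hCval : ∀ i j : Fin k, CC A haar (ci i) (ci j) = b + (if i = j then a - b else 0) := by
    intro i j
    by_cases h : i = j
    · subst h; rw [if_pos rfl, hCdiag]; ring
    · rw [if_neg h, add_zero]
      exact hCoff _ _ fun hc => h (Fin.castLE_injective hkn hc)
  -- weights: integrability of products
  have hwmul : ∀ i j : Fin k, Integrable (fun w => w i * w j) μ := by
    intro i j
    have hi := hmom i; have hj := hmom j
    have hbnd : Integrable (fun w : Fin k → ℝ => (1/2 : ℝ) * (w i ^ 2 + w j ^ 2)) μ :=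
      (hi.integrable_sq.add hj.integrable_sq).const_mul (1/2)
    refine hbnd.mono'
      (hi.aestronglyMeasurable.mul hj.aestronglyMeasurable) (ae_of_all _ fun w => ?_)
    rw [Real.norm_eq_abs, abs_mul]
    nlinarith [sq_nonneg (|w i| - |w j|), sq_abs (w i), sq_abs (w j),
      abs_nonneg (w i), abs_nonneg (w j)]
  obtain ⟨T, hT⟩ : ∃ T : ℝ, T = ∑ i : Fin k, ∫ w, w i * w i ∂μ := ⟨_, rfl⟩
  obtain ⟨Q, hQ⟩ : ∃ Q : ℝ, Q = ∑ i : Fin k, ∑ j : Fin k, ∫ w, w i * w j ∂μ := ⟨_, rfl⟩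
  obtain ⟨s, hs⟩ : ∃ s : ℝ, s = ∑ i : Fin k, ∑ j : Fin k, CC A haar (ci i) (ci j) := ⟨_, rfl⟩
  -- LHS expansion
  have hLHS : (∫ p : (Fin k → ℝ) × Matrix.orthogonalGroup (Fin n) ℝ,
      (∑ i : Fin k, p.1 i * fA A p.2 (ci i)) ^ 2 ∂(μ.prod haar))
      = ∑ i : Fin k, ∑ j : Fin k, (∫ w, w i * w j ∂μ) * CC A haar (ci i) (ci j) := by
    have hptwise : ∀ p : (Fin k → ℝ) × Matrix.orthogonalGroup (Fin n) ℝ,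
        (∑ i : Fin k, p.1 i * fA A p.2 (ci i)) ^ 2
        = ∑ i : Fin k, ∑ j : Fin k, (p.1 i * p.1 j) * (fA A p.2 (ci i) * fA A p.2 (ci j)) := by
      intro p
      rw [sq, Finset.sum_mul_sum]
      exact Finset.sum_congr rfl fun i _ => Finset.sum_congr rfl fun j _ => by ring
    simp_rw [hptwise]
    rw [integral_finset_sum _ (fun i _ => integrable_finset_sum _
      (fun j _ => (hwmul i j).mul_prod (fA_mul_integrable A haar (ci i) (ci j))))]
    refine Finset.sum_congr rfl fun i _ => ?_
    rw [integral_finset_sum _ (fun j _ =>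
      (hwmul i j).mul_prod (fA_mul_integrable A haar (ci i) (ci j)))]
    refine Finset.sum_congr rfl fun j _ => ?_
    exact integral_prod_mul (fun w : Fin k → ℝ => w i * w j)
      (fun U => fA A U (ci i) * fA A U (ci j))
  -- RHS expansion
  have hRHS : (∫ U, (∑ i : Fin k, (n : ℝ) / k * fA A U (ci i)) ^ 2 ∂haar)
      = ((n : ℝ) / k) ^ 2 * s := by
    have hptwise : ∀ U, (∑ i : Fin k, (n : ℝ) / k * fA A U (ci i)) ^ 2
        = ((n : ℝ) / k) ^ 2 * ∑ i : Fin k, ∑ j : Fin k, fA A U (ci i) * fA A U (ci j) := by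
      intro U
      rw [← Finset.mul_sum, mul_pow, sq (∑ i : Fin k, fA A U (ci i)), Finset.sum_mul_sum]
    simp_rw [hptwise]
    rw [integral_const_mul, integral_finset_sum _ (fun i _ => integrable_finset_sum _
      (fun j _ => fA_mul_integrable A haar (ci i) (ci j)))]
    congr 1
    rw [hs]
    refine Finset.sum_congr rfl fun i _ => ?_
    rw [integral_finset_sum _ (fun j _ => fA_mul_integrable A haar (ci i) (ci j))]
    rfl
  -- s ≥ 0
  have hs0 : 0 ≤ s := by
    have : s = ∫ U, (∑ i : Fin k, fA A U (ci i)) ^ 2 ∂haar := by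
      have hptwise : ∀ U, (∑ i : Fin k, fA A U (ci i)) ^ 2
          = ∑ i : Fin k, ∑ j : Fin k, fA A U (ci i) * fA A U (ci j) := by
        intro U; rw [sq, Finset.sum_mul_sum]
      simp_rw [hptwise]
      rw [integral_finset_sum _ (fun i _ => integrable_finset_sum _
        (fun j _ => fA_mul_integrable A haar (ci i) (ci j))), hs]
      refine Finset.sum_congr rfl fun i _ => ?_
      rw [integral_finset_sum _ (fun j _ => fA_mul_integrable A haar (ci i) (ci j))]
      rfl
    rw [this]
    exact integral_nonneg fun U => sq_nonneg _
  -- value of s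
  have hsval : s = (k : ℝ) * (a - b) + (k : ℝ) ^ 2 * b := by
    rw [hs]
    simp only [hCval, Finset.sum_add_distrib, Finset.sum_ite_eq, Finset.mem_univ, if_true,
      Finset.sum_const, Finset.card_univ, Fintype.card_fin, nsmul_eq_mul, smul_eq_mul]
    ring
  -- value of the LHS double sum
  have hsum : (∑ i : Fin k, ∑ j : Fin k, (∫ w, w i * w j ∂μ) * CC A haar (ci i) (ci j))
      = b * Q + (a - b) * T := by
    have step1 : ∀ i : Fin k, (∑ j : Fin k, (∫ w, w i * w j ∂μ) * CC A haar (ci i) (ci j))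
        = (∑ j : Fin k, (∫ w, w i * w j ∂μ) * b) + (∫ w, w i * w i ∂μ) * (a - b) := by
      intro i
      calc (∑ j : Fin k, (∫ w, w i * w j ∂μ) * CC A haar (ci i) (ci j))
          = ∑ j : Fin k, ((∫ w, w i * w j ∂μ) * b
              + if i = j then (∫ w, w i * w j ∂μ) * (a - b) else 0) :=
            Finset.sum_congr rfl fun j _ => by rw [hCval]; split_ifs <;> ring
        _ = (∑ j : Fin k, (∫ w, w i * w j ∂μ) * b)
              + ∑ j : Fin k, (if i = j then (∫ w, w i * w j ∂μ) * (a - b) else 0) :=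
            Finset.sum_add_distrib
        _ = (∑ j : Fin k, (∫ w, w i * w j ∂μ) * b) + (∫ w, w i * w i ∂μ) * (a - b) := by
            rw [Finset.sum_ite_eq, if_pos (Finset.mem_univ i)]
    calc (∑ i : Fin k, ∑ j : Fin k, (∫ w, w i * w j ∂μ) * CC A haar (ci i) (ci j))
        = ∑ i : Fin k, ((∑ j : Fin k, (∫ w, w i * w j ∂μ) * b)
            + (∫ w, w i * w i ∂μ) * (a - b)) :=
          Finset.sum_congr rfl fun i _ => step1 i
      _ = (∑ i : Fin k, ∑ j : Fin k, (∫ w, w i * w j ∂μ) * b)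
            + ∑ i : Fin k, (∫ w, w i * w i ∂μ) * (a - b) := Finset.sum_add_distrib
      _ = b * Q + (a - b) * T := by
          rw [hQ, hT, Finset.mul_sum, Finset.mul_sum]
          congr 1
          · exact Finset.sum_congr rfl fun i _ => by
              rw [Finset.mul_sum]; exact Finset.sum_congr rfl fun j _ => mul_comm _ _
          · exact Finset.sum_congr rfl fun i _ => mul_comm _ _
  -- integrability of weight sums
  have hS_int : Integrable (fun w : Fin k → ℝ => ∑ i, w i) μ :=
    integrable_finset_sum _ fun i _ => (hmom i).integrable one_le_two
  have hSsq_int : Integrable (fun w : Fin k → ℝ => (∑ i, w i) ^ 2) μ :=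
    by
    have h := (memLp_finset_sum (μ := μ) Finset.univ
      (fun (i : Fin k) (_ : i ∈ Finset.univ) => hmom i)).integrable_sq
    exact h
  have hQ_eq : Q = ∫ w, (∑ i, w i) ^ 2 ∂μ := by
    have hptwise : ∀ w : Fin k → ℝ, (∑ i, w i) ^ 2 = ∑ i : Fin k, ∑ j : Fin k, w i * w j := by
      intro w; rw [sq, Finset.sum_mul_sum]
    simp_rw [hptwise]
    rw [hQ, integral_finset_sum _ (fun i _ => integrable_finset_sum _ (fun j _ => hwmul i j))]
    exact Finset.sum_congr rfl fun i _ =>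
      (integral_finset_sum _ (fun j _ => hwmul i j)).symm
  -- Q ≥ n²
  have hQn : (n : ℝ) ^ 2 ≤ Q := by
    have h0 : 0 ≤ ∫ w, (∑ i, w i - (n : ℝ)) ^ 2 ∂μ := integral_nonneg fun w => sq_nonneg _
    have hx : (fun w : Fin k → ℝ => (∑ i, w i - (n : ℝ)) ^ 2)
        = fun w => ((∑ i, w i) ^ 2 - 2 * (n : ℝ) * ∑ i, w i) + (n : ℝ) ^ 2 :=
      funext fun w => by ring
    have hI2' : Integrable (fun w : Fin k → ℝ => 2 * (n : ℝ) * ∑ i, w i) μ :=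
      hS_int.const_mul _
    have hI1' : Integrable
        (fun w : Fin k → ℝ => (∑ i, w i) ^ 2 - 2 * (n : ℝ) * ∑ i, w i) μ :=
      hSsq_int.sub hI2'
    rw [hx, integral_add hI1' (integrable_const _),
      integral_sub hSsq_int hI2', integral_const_mul, hmean,
      integral_const, probReal_univ, smul_eq_mul, one_mul] at h0
    rw [hQ_eq]
    linarith
  -- Q ≤ k T
  have hQT : Q ≤ (k : ℝ) * T := by
    rw [hQ_eq, hT]
    have hm : ∀ w : Fin k → ℝ, (∑ i, w i) ^ 2 ≤ (k : ℝ) * ∑ i : Fin k, (w i) ^ 2 := by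
      intro w
      have := sq_sum_le_card_mul_sum_sq (s := (Finset.univ : Finset (Fin k)))
        (f := fun i => w i)
      simpa [Finset.card_univ, Fintype.card_fin] using this
    have hmono := integral_mono hSsq_int (((integrable_finset_sum (μ := μ) Finset.univ
      (fun i _ => (hmom i).integrable_sq))).const_mul (k : ℝ)) hm
    calc (∫ w, (∑ i, w i) ^ 2 ∂μ) ≤ ∫ w, (k : ℝ) * ∑ i : Fin k, (w i) ^ 2 ∂μ := hmono
      _ = (k : ℝ) * ∑ i : Fin k, ∫ w, w i * w i ∂μ := by
          rw [integral_const_mul, integral_finset_sum _ (fun i _ => (hmom i).integrable_sq)]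
          simp_rw [pow_two]
  -- finish
  rw [ge_iff_le, hLHS, hRHS, hsum, hsval]
  have hk' : (1 : ℝ) ≤ (k : ℝ) := by exact_mod_cast hk
  have hkpos : (0 : ℝ) < (k : ℝ) := by linarith
  rw [div_pow, div_mul_eq_mul_div, div_le_iff₀ (by positivity)]
  have h1 : 0 ≤ (a - b) * ((k : ℝ) * T - Q) * (k : ℝ) :=
    mul_nonneg (mul_nonneg (by linarith) (by linarith)) hkpos.le
  have h2 : 0 ≤ (Q - (n : ℝ) ^ 2) * ((k : ℝ) * (a - b) + (k : ℝ) ^ 2 * b) :=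
    mul_nonneg (by linarith) (hsval ▸ hs0)
  nlinarith [h1, h2]

end Main
end

section
/- Fix an integer n ≥ 2, let r₁ and r₂ be the first two rows of a Haar-random n×n orthogonal matrix, and let θ ∈ ℝ. Then for every n×n real matrix A, E[(r₁ᵀ A r₁) · ((cos θ · r₁ + sin θ · r₂)ᵀ A (cos θ · r₁ + sin θ · r₂))] ≥ E[(r₁ᵀ A r₁)(r₂ᵀ A r₂)], where the expectation is over the Haar measure. -/
open MeasureTheory Matrix

namespace Stmt2Aux

variable {n : ℕ}

lemma meas_entry (i j : Fin n) :
    Measurable fun U : Matrix.orthogonalGroup (Fin n) ℝ => (U : Matrix (Fin n) (Fin n) ℝ) i j :=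
  (measurable_pi_apply j).comp ((measurable_pi_apply i).comp measurable_subtype_coe)

lemma meas_mul (g : Matrix.orthogonalGroup (Fin n) ℝ) :
    Measurable fun x : Matrix.orthogonalGroup (Fin n) ℝ => g * x := by
  apply Measurable.subtype_mk
  show Measurable fun x : Matrix.orthogonalGroup (Fin n) ℝ =>
    ((g : Matrix (Fin n) (Fin n) ℝ) * (x : Matrix (Fin n) (Fin n) ℝ))
  apply measurable_pi_lambda
  intro i
  apply measurable_pi_lambda
  intro j
  simp only [Matrix.mul_apply]
  exact Finset.measurable_sum _ fun k _ => (meas_entry k j).const_mul _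

lemma int_inv (μ : Measure (Matrix.orthogonalGroup (Fin n) ℝ)) (hμ : IsHaarProb n μ)
    (g : Matrix.orthogonalGroup (Fin n) ℝ) (f : Matrix.orthogonalGroup (Fin n) ℝ → ℝ)
    (hf : AEStronglyMeasurable f μ) :
    ∫ U, f U ∂μ = ∫ U, f (g * U) ∂μ := by
  conv_lhs => rw [← hμ.2 g]
  rw [integral_map (meas_mul g).aemeasurable]
  rw [hμ.2 g]; exact hf

lemma entry_abs_le (U : Matrix.orthogonalGroup (Fin n) ℝ) (i j : Fin n) :
    |(U : Matrix (Fin n) (Fin n) ℝ) i j| ≤ 1 := by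
  have h : (U : Matrix (Fin n) (Fin n) ℝ) * star (U : Matrix (Fin n) (Fin n) ℝ) = 1 :=
    (Unitary.mem_iff.mp U.2).2
  have h2 : ∑ k, ((U : Matrix (Fin n) (Fin n) ℝ) i k)^2 = 1 := by
    have := congrArg (fun M => M i i) h
    simp only [Matrix.mul_apply, Matrix.one_apply_eq, Matrix.star_apply, star_trivial] at this
    rw [← this]
    exact Finset.sum_congr rfl fun k _ => by ring
  have h3 : ((U : Matrix (Fin n) (Fin n) ℝ) i j)^2 ≤ 1 := by
    rw [← h2]
    exact Finset.single_le_sum (f := fun k => ((U : Matrix (Fin n) (Fin n) ℝ) i k)^2)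
      (fun k _ => sq_nonneg _) (Finset.mem_univ j)
  nlinarith [abs_nonneg ((U : Matrix (Fin n) (Fin n) ℝ) i j),
    sq_abs ((U : Matrix (Fin n) (Fin n) ℝ) i j)]

lemma bilin_bound (A : Matrix (Fin n) (Fin n) ℝ) (u v : Fin n → ℝ)
    (hu : ∀ i, |u i| ≤ 1) (hv : ∀ i, |v i| ≤ 1) :
    |u ⬝ᵥ A.mulVec v| ≤ ∑ i, ∑ j, |A i j| := by
  have hexp : u ⬝ᵥ A.mulVec v = ∑ i, u i * ∑ j, A i j * v j := rfl
  rw [hexp]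
  refine (Finset.abs_sum_le_sum_abs _ _).trans (Finset.sum_le_sum fun i _ => ?_)
  rw [abs_mul]
  calc |u i| * |∑ j, A i j * v j| ≤ 1 * |∑ j, A i j * v j| :=
        mul_le_mul_of_nonneg_right (hu i) (abs_nonneg _)
    _ = |∑ j, A i j * v j| := one_mul _
    _ ≤ ∑ j, |A i j| := (Finset.abs_sum_le_sum_abs _ _).trans (Finset.sum_le_sum fun j _ => by
        rw [abs_mul]
        nlinarith [hv j, abs_nonneg (A i j), abs_nonneg (v j)])

lemma meas_bilin (A : Matrix (Fin n) (Fin n) ℝ) (i j : Fin n) :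
    Measurable fun U : Matrix.orthogonalGroup (Fin n) ℝ =>
      ((U : Matrix (Fin n) (Fin n) ℝ) i) ⬝ᵥ A.mulVec ((U : Matrix (Fin n) (Fin n) ℝ) j) := by
  show Measurable fun U : Matrix.orthogonalGroup (Fin n) ℝ =>
    ∑ a, (U : Matrix (Fin n) (Fin n) ℝ) i a * ∑ b, A a b * (U : Matrix (Fin n) (Fin n) ℝ) j b
  exact Finset.measurable_sum _ fun a _ =>
    (meas_entry i a).mul (Finset.measurable_sum _ fun b _ => (meas_entry j b).const_mul _)

end Stmt2Aux

open Stmt2Aux in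
/-- For `n ≥ 2`, `r₁, r₂` the first two rows of a Haar-random `n×n` orthogonal matrix,
`θ ∈ ℝ` and any `n×n` real matrix `A`,
`E[(r₁ᵀAr₁)·((cos θ·r₁ + sin θ·r₂)ᵀ A (cos θ·r₁ + sin θ·r₂))] ≥ E[(r₁ᵀAr₁)(r₂ᵀAr₂)]`. -/
theorem stmt2 (n : ℕ) (hn : 2 ≤ n)
    (μ : Measure (Matrix.orthogonalGroup (Fin n) ℝ)) (hμ : IsHaarProb n μ)
    (θ : ℝ) (A : Matrix (Fin n) (Fin n) ℝ) :
    ∫ U : Matrix.orthogonalGroup (Fin n) ℝ,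
        (fun r₁ r₂ : Fin n → ℝ =>
            (r₁ ⬝ᵥ A.mulVec r₁) *
              ((fun j => Real.cos θ * r₁ j + Real.sin θ * r₂ j) ⬝ᵥ
                A.mulVec fun j => Real.cos θ * r₁ j + Real.sin θ * r₂ j))
          ((U : Matrix (Fin n) (Fin n) ℝ) ⟨0, by omega⟩)
          ((U : Matrix (Fin n) (Fin n) ℝ) ⟨1, by omega⟩) ∂μ ≥
      ∫ U : Matrix.orthogonalGroup (Fin n) ℝ,
        (fun r₁ r₂ : Fin n → ℝ => (r₁ ⬝ᵥ A.mulVec r₁) * (r₂ ⬝ᵥ A.mulVec r₂))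
          ((U : Matrix (Fin n) (Fin n) ℝ) ⟨0, by omega⟩)
          ((U : Matrix (Fin n) (Fin n) ℝ) ⟨1, by omega⟩) ∂μ := by
  have hprob : IsProbabilityMeasure μ := hμ.1
  set i0 : Fin n := ⟨0, by omega⟩ with hi0
  set i1 : Fin n := ⟨1, by omega⟩ with hi1
  have hne : i0 ≠ i1 := by simp [hi0, hi1, Fin.ext_iff]
  set c := Real.cos θ
  set s := Real.sin θ
  -- rows and bilinear forms
  set row : Fin n → Matrix.orthogonalGroup (Fin n) ℝ → (Fin n → ℝ) :=
    fun i U => (U : Matrix (Fin n) (Fin n) ℝ) i with hrow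
  set B : (Fin n → ℝ) → (Fin n → ℝ) → ℝ := fun u v => u ⬝ᵥ A.mulVec v with hB
  set C := ∑ i, ∑ j, |A i j| with hC
  -- the four basic integrands
  set f1 : Matrix.orthogonalGroup (Fin n) ℝ → ℝ :=
    fun U => B (row i0 U) (row i0 U) * B (row i0 U) (row i0 U) with hf1
  set f2 : Matrix.orthogonalGroup (Fin n) ℝ → ℝ :=
    fun U => B (row i0 U) (row i0 U) * B (row i1 U) (row i1 U) with hf2
  set f3 : Matrix.orthogonalGroup (Fin n) ℝ → ℝ :=
    fun U => B (row i0 U) (row i0 U) * (B (row i0 U) (row i1 U) + B (row i1 U) (row i0 U))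
      with hf3
  set f4 : Matrix.orthogonalGroup (Fin n) ℝ → ℝ :=
    fun U => B (row i1 U) (row i1 U) * B (row i1 U) (row i1 U) with hf4
  have hBmeas : ∀ i j : Fin n,
      Measurable fun U : Matrix.orthogonalGroup (Fin n) ℝ => B (row i U) (row j U) :=
    fun i j => meas_bilin A i j
  have hBbd : ∀ (i j : Fin n) U, |B (row i U) (row j U)| ≤ C := fun i j U =>
    bilin_bound A _ _ (fun k => entry_abs_le U i k) (fun k => entry_abs_le U j k)
  have hCnn : 0 ≤ C := Finset.sum_nonneg fun i _ => Finset.sum_nonneg fun j _ => abs_nonneg _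
  -- integrability
  have hint : ∀ (i j k l : Fin n),
      Integrable (fun U => B (row i U) (row j U) * B (row k U) (row l U)) μ := by
    intro i j k l
    refine Integrable.mono' (integrable_const (C * C))
      ((hBmeas i j).mul (hBmeas k l)).aestronglyMeasurable (ae_of_all _ fun U => ?_)
    rw [Real.norm_eq_abs, abs_mul]
    exact mul_le_mul (hBbd i j U) (hBbd k l U) (abs_nonneg _) hCnn
  have hint1 : Integrable f1 μ := hint i0 i0 i0 i0
  have hint2 : Integrable f2 μ := hint i0 i0 i1 i1
  have hint4 : Integrable f4 μ := hint i1 i1 i1 i1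
  have hint3 : Integrable f3 μ := by
    have : f3 = fun U => B (row i0 U) (row i0 U) * B (row i0 U) (row i1 U)
        + B (row i0 U) (row i0 U) * B (row i1 U) (row i0 U) := by
      funext U; simp [hf3]; ring
    rw [this]
    exact (hint i0 i0 i0 i1).add (hint i0 i0 i1 i0)
  -- the diagonal sign matrix
  have dmem : (Matrix.diagonal (fun i => if i = i1 then (-1:ℝ) else 1)) ∈
      Matrix.orthogonalGroup (Fin n) ℝ := by
    rw [Matrix.mem_orthogonalGroup_iff,
      Matrix.diagonal_transpose, Matrix.diagonal_mul_diagonal,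
      show (fun i => (if i = i1 then (-1:ℝ) else 1) *
            (fun i => if i = i1 then (-1:ℝ) else 1) i) = fun _ => (1:ℝ) from
        funext fun i => by by_cases h : i = i1 <;> simp [h],
      Matrix.diagonal_one]
  set d : Matrix.orthogonalGroup (Fin n) ℝ := ⟨_, dmem⟩ with hd
  have hdrow0 : ∀ U, row i0 (d * U) = row i0 U := by
    intro U
    funext j
    show (Matrix.diagonal (fun i => if i = i1 then (-1:ℝ) else 1) *
      (U : Matrix (Fin n) (Fin n) ℝ)) i0 j = (U : Matrix (Fin n) (Fin n) ℝ) i0 j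
    rw [Matrix.diagonal_mul]
    simp [hne]
  have hdrow1 : ∀ U, row i1 (d * U) = fun j => -(row i1 U j) := by
    intro U
    funext j
    show (Matrix.diagonal (fun i => if i = i1 then (-1:ℝ) else 1) *
      (U : Matrix (Fin n) (Fin n) ℝ)) i1 j = -(U : Matrix (Fin n) (Fin n) ℝ) i1 j
    rw [Matrix.diagonal_mul]
    simp
  -- the swap matrix
  have smem : (Matrix.of fun i j => if Equiv.swap i0 i1 i = j then (1:ℝ) else 0) ∈
      Matrix.orthogonalGroup (Fin n) ℝ := by
    rw [Matrix.mem_orthogonalGroup_iff]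
    funext i j
    simp [Matrix.mul_apply, Matrix.star_apply, Matrix.one_apply, ite_mul, Finset.sum_ite_eq,
      Equiv.apply_eq_iff_eq, eq_comm]
  set w : Matrix.orthogonalGroup (Fin n) ℝ := ⟨_, smem⟩ with hw
  have hwrow : ∀ (i : Fin n) U, row i (w * U) = row (Equiv.swap i0 i1 i) U := by
    intro i U
    funext j
    show ((Matrix.of fun i j => if Equiv.swap i0 i1 i = j then (1:ℝ) else 0) *
      (U : Matrix (Fin n) (Fin n) ℝ)) i j = _
    simp [Matrix.mul_apply, ite_mul, Finset.sum_ite_eq]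
    rfl
  -- I3 = 0
  have hI3 : ∫ U, f3 U ∂μ = 0 := by
    have h1 : ∫ U, f3 U ∂μ = ∫ U, f3 (d * U) ∂μ :=
      int_inv μ hμ d f3 hint3.aestronglyMeasurable
    have h2 : ∀ U, f3 (d * U) = -f3 U := by
      intro U
      simp only [hf3, hdrow0, hdrow1]
      have hneg : ∀ u : Fin n → ℝ, (fun j => -(u j)) = -u := fun u => rfl
      simp only [hneg, hB, Matrix.mulVec_neg, dotProduct_neg, neg_dotProduct]
      ring
    have h3 : ∫ U, f3 (d * U) ∂μ = ∫ U, -f3 U ∂μ := by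
      simp_rw [h2]
    rw [integral_neg] at h3
    linarith [h1, h3]
  -- I4 = I1 by swap invariance
  have hI41 : ∫ U, f4 U ∂μ = ∫ U, f1 U ∂μ := by
    have h1 : ∫ U, f1 U ∂μ = ∫ U, f1 (w * U) ∂μ :=
      int_inv μ hμ w f1 hint1.aestronglyMeasurable
    have h2 : ∀ U, f1 (w * U) = f4 U := by
      intro U
      simp only [hf1, hf4, hwrow, Equiv.swap_apply_left]
    rw [h1]
    simp_rw [h2]
  -- I2 ≤ I1 by AM-GM
  have hI21 : ∫ U, f2 U ∂μ ≤ ∫ U, f1 U ∂μ := by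
    have hle : ∫ U, f2 U ∂μ ≤ ∫ U, (f1 U + f4 U)/2 ∂μ := by
      apply integral_mono hint2 ((hint1.add hint4).div_const 2)
      intro U
      show f2 U ≤ (f1 U + f4 U) / 2
      simp only [hf1, hf2, hf4]
      nlinarith [sq_nonneg (B (row i0 U) (row i0 U) - B (row i1 U) (row i1 U))]
    have heq : ∫ U, (f1 U + f4 U)/2 ∂μ = ∫ U, f1 U ∂μ := by
      rw [integral_div, integral_add hint1 hint4, hI41]
      ring
    linarith [hle, heq]
  -- bilinear expansion
  have hexp : ∀ u v : Fin n → ℝ,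
      ((fun j => c * u j + s * v j) ⬝ᵥ A.mulVec fun j => c * u j + s * v j)
        = c^2 * (u ⬝ᵥ A.mulVec u) + (u ⬝ᵥ A.mulVec u) * 0
          + ((c*s) * ((u ⬝ᵥ A.mulVec v) + (v ⬝ᵥ A.mulVec u)) + s^2 * (v ⬝ᵥ A.mulVec v)) := by
    intro u v
    have h : (fun j => c * u j + s * v j) = c • u + s • v := rfl
    rw [h]
    simp only [Matrix.mulVec_add, Matrix.mulVec_smul, dotProduct_add,
      add_dotProduct, dotProduct_smul, smul_dotProduct, smul_eq_mul]
    ring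
  have key : ∀ U : Matrix.orthogonalGroup (Fin n) ℝ,
      ((row i0 U) ⬝ᵥ A.mulVec (row i0 U)) *
        ((fun j => c * row i0 U j + s * row i1 U j) ⬝ᵥ
          A.mulVec fun j => c * row i0 U j + s * row i1 U j)
      = c^2 * f1 U + ((c*s) * f3 U + s^2 * f2 U) := by
    intro U
    rw [hexp]
    simp only [hf1, hf2, hf3, hB]
    ring
  have hL : ∫ U : Matrix.orthogonalGroup (Fin n) ℝ,
      (fun r₁ r₂ : Fin n → ℝ =>
          (r₁ ⬝ᵥ A.mulVec r₁) *
            ((fun j => c * r₁ j + s * r₂ j) ⬝ᵥ A.mulVec fun j => c * r₁ j + s * r₂ j))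
        (row i0 U) (row i1 U) ∂μ
      = c^2 * ∫ U, f1 U ∂μ + ((c*s) * ∫ U, f3 U ∂μ + s^2 * ∫ U, f2 U ∂μ) := by
    have : (fun U : Matrix.orthogonalGroup (Fin n) ℝ =>
        (fun r₁ r₂ : Fin n → ℝ =>
          (r₁ ⬝ᵥ A.mulVec r₁) *
            ((fun j => c * r₁ j + s * r₂ j) ⬝ᵥ A.mulVec fun j => c * r₁ j + s * r₂ j))
        (row i0 U) (row i1 U))
        = fun U => c^2 * f1 U + ((c*s) * f3 U + s^2 * f2 U) := funext fun U => key U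
    rw [this]
    have h123 : ∫ U, (c^2 * f1 U + (c*s*f3 U + s^2*f2 U)) ∂μ
        = (∫ U, c^2*f1 U ∂μ) + (∫ U, (c*s*f3 U + s^2*f2 U) ∂μ) :=
      integral_add (hint1.const_mul _) ((hint3.const_mul _).add (hint2.const_mul _))
    have h23 : ∫ U, (c*s*f3 U + s^2*f2 U) ∂μ = (∫ U, c*s*f3 U ∂μ) + ∫ U, s^2*f2 U ∂μ :=
      integral_add (hint3.const_mul _) (hint2.const_mul _)
    rw [h123, h23, integral_const_mul, integral_const_mul, integral_const_mul]
  show (∫ U : Matrix.orthogonalGroup (Fin n) ℝ,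
      (fun r₁ r₂ : Fin n → ℝ =>
          (r₁ ⬝ᵥ A.mulVec r₁) *
            ((fun j => c * r₁ j + s * r₂ j) ⬝ᵥ A.mulVec fun j => c * r₁ j + s * r₂ j))
        (row i0 U) (row i1 U) ∂μ)
    ≥ ∫ U, f2 U ∂μ
  rw [hL, hI3]
  have hpyth : c^2 + s^2 = 1 := Real.cos_sq_add_sin_sq θ
  have hs2 : s^2 = 1 - c^2 := by linarith
  rw [hs2]
  nlinarith [mul_nonneg (sq_nonneg c) (sub_nonneg.2 hI21)]
end

section
/- Fix C₀ > 0, an integer k ≥ 1, θ with 0 < θ ≤ C₀, and c > 0. Let f₁ and f₂ be the probability density functions on ℝ^k of N(0,1)^k and N(0,1+θ)^k respectively, i.e. f₁(z) = (2π)^{−k/2} e^{−‖z‖²/2} and f₂(z) = (2π(1+θ))^{−k/2} e^{−‖z‖²/(2(1+θ))}. Then for every z ∈ ℝ^k with k − c ≤ ‖z‖² ≤ k + c, one has exp(kθ²/(4(C₀+1)²) − θc/2) ≤ f₁(z)/f₂(z) ≤ exp(kθ²/4 + θc/2). -/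
open scoped Real



lemma hasDerivAt_g (x : ℝ) (hx : (-1:ℝ) < x) :
    HasDerivAt (fun x => Real.log (1+x) - x/(1+x)) (x/(1+x)^2) x := by
  have hne : (1:ℝ)+x ≠ 0 := ne_of_gt (by linarith)
  have h1 : HasDerivAt (fun x:ℝ => 1 + x) 1 x := (hasDerivAt_id x).const_add 1
  have hlog := h1.log hne
  have hdiv := (hasDerivAt_id x).div h1 hne
  have := hlog.sub hdiv
  refine this.congr_deriv ?_
  simp only [id]
  field_simp
  ring

lemma g_upper (θ : ℝ) (hθ : 0 ≤ θ) : Real.log (1+θ) - θ/(1+θ) ≤ θ^2/2 := by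
  set F : ℝ → ℝ := fun x => x^2/2 - (Real.log (1+x) - x/(1+x)) with hF
  have hd : ∀ x ∈ Set.Ici (0:ℝ), HasDerivAt F (x - x/(1+x)^2) x := by
    intro x hx
    have hx0 : (0:ℝ) ≤ x := hx
    exact (((hasDerivAt_pow 2 x).div_const 2).congr_deriv (by push_cast; ring)).sub
      (hasDerivAt_g x (by linarith))
  have hmono : MonotoneOn F (Set.Ici 0) := by
    apply monotoneOn_of_deriv_nonneg (convex_Ici 0)
    · exact fun x hx => ((hd x hx).continuousAt).continuousWithinAt
    · intro x hx
      rw [interior_Ici, Set.mem_Ioi] at hx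
      exact ((hd x (Set.mem_Ici.mpr (le_of_lt hx))).differentiableAt).differentiableWithinAt
    · intro x hx
      rw [interior_Ici, Set.mem_Ioi] at hx
      rw [(hd x (Set.mem_Ici.mpr (le_of_lt hx))).deriv]
      have h1 : (1:ℝ) ≤ (1+x)^2 := by nlinarith [hx.le]
      have : x/(1+x)^2 ≤ x := by
        rw [div_le_iff₀ (by nlinarith)]
        nlinarith [hx.le]
      linarith
  have h0 : F 0 ≤ F θ := hmono (Set.mem_Ici.mpr (le_refl 0)) (Set.mem_Ici.mpr hθ) hθ
  simp [hF] at h0 ⊢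
  linarith

lemma g_lower (C₀ θ : ℝ) (hC₀ : 0 < C₀) (hθ : 0 ≤ θ) (hθC : θ ≤ C₀) :
    θ^2/(2*(C₀+1)^2) ≤ Real.log (1+θ) - θ/(1+θ) := by
  set A : ℝ := (C₀+1)^2 with hA
  have hApos : 0 < A := by positivity
  set F : ℝ → ℝ := fun x => (Real.log (1+x) - x/(1+x)) - x^2/(2*A) with hF
  have hd : ∀ x ∈ Set.Icc (0:ℝ) C₀, HasDerivAt F (x/(1+x)^2 - x/A) x := by
    intro x hx
    exact (hasDerivAt_g x (by linarith [hx.1])).sub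
      (((hasDerivAt_pow 2 x).div_const (2*A)).congr_deriv (by push_cast; field_simp))
  have hmono : MonotoneOn F (Set.Icc 0 C₀) := by
    apply monotoneOn_of_deriv_nonneg (convex_Icc 0 C₀)
    · exact fun x hx => ((hd x hx).continuousAt).continuousWithinAt
    · intro x hx
      rw [interior_Icc] at hx
      exact ((hd x ⟨hx.1.le, hx.2.le⟩).differentiableAt).differentiableWithinAt
    · intro x hx
      rw [interior_Icc] at hx
      rw [(hd x ⟨hx.1.le, hx.2.le⟩).deriv]
      have h1 : (1+x)^2 ≤ A := by rw [hA]; nlinarith [hx.1.le, hx.2.le]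
      have h2 : (0:ℝ) < (1+x)^2 := by nlinarith [hx.1.le]
      have : x/A ≤ x/(1+x)^2 := by
        exact div_le_div_of_nonneg_left hx.1.le h2 h1
      linarith
  have h0 : F 0 ≤ F θ := hmono ⟨le_refl 0, hC₀.le⟩ ⟨hθ, hθC⟩ hθ
  simp [hF] at h0
  linarith

/-- For `0 < θ ≤ C₀`, `c > 0` and `z ∈ ℝ^k` with `k − c ≤ ‖z‖² ≤ k + c`, the ratio of the
`N(0,1)^k` and `N(0,1+θ)^k` densities at `z` satisfies
`exp(kθ²/(4(C₀+1)²) − θc/2) ≤ f₁(z)/f₂(z) ≤ exp(kθ²/4 + θc/2)`. -/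
theorem stmt9 (C₀ : ℝ) (hC₀ : 0 < C₀) (k : ℕ) (hk : 1 ≤ k)
    (θ : ℝ) (hθ0 : 0 < θ) (hθ : θ ≤ C₀) (c : ℝ) (hc : 0 < c)
    (z : Fin k → ℝ) (hz1 : (k : ℝ) - c ≤ ∑ i, z i ^ 2) (hz2 : ∑ i, z i ^ 2 ≤ (k : ℝ) + c) :
    let f₁ : ℝ := (2 * π) ^ (-(k : ℝ) / 2) * Real.exp (-(∑ i, z i ^ 2) / 2)
    let f₂ : ℝ :=
      (2 * π * (1 + θ)) ^ (-(k : ℝ) / 2) * Real.exp (-(∑ i, z i ^ 2) / (2 * (1 + θ)))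
    Real.exp ((k : ℝ) * θ ^ 2 / (4 * (C₀ + 1) ^ 2) - θ * c / 2) ≤ f₁ / f₂ ∧
      f₁ / f₂ ≤ Real.exp ((k : ℝ) * θ ^ 2 / 4 + θ * c / 2) := by
  intro f₁ f₂
  set S : ℝ := ∑ i, z i ^ 2 with hSdef
  have hpi : (0:ℝ) < 2 * π := by positivity
  have ht : (0:ℝ) < 1 + θ := by linarith
  have hf₂pos : 0 < f₂ := by
    show 0 < (2 * π * (1 + θ)) ^ (-(k : ℝ) / 2) * Real.exp (-S / (2 * (1 + θ)))
    positivity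
  have key : f₁ / f₂ =
      Real.exp ((k:ℝ)/2 * Real.log (1+θ) - S * θ * (1+θ)⁻¹ / 2) := by
    rw [div_eq_iff (ne_of_gt hf₂pos)]
    show (2 * π) ^ (-(k : ℝ) / 2) * Real.exp (-S / 2) = _ *
      ((2 * π * (1 + θ)) ^ (-(k : ℝ) / 2) * Real.exp (-S / (2 * (1 + θ))))
    rw [Real.rpow_def_of_pos hpi, Real.rpow_def_of_pos (by positivity : (0:ℝ) < 2*π*(1+θ)),
      Real.log_mul (ne_of_gt hpi) (ne_of_gt ht), ← Real.exp_add, ← Real.exp_add, ← Real.exp_add]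
    congr 1
    field_simp
    ring
  rw [key]
  have hg1 := g_lower C₀ θ hC₀ hθ0.le hθ
  have hg2 := g_upper θ hθ0.le
  rw [div_eq_mul_inv θ (1+θ)] at hg1 hg2
  have hw0 : 0 < (1+θ)⁻¹ := by positivity
  have hw1 : (1+θ)⁻¹ ≤ 1 := by
    rw [inv_le_one_iff₀]; right; linarith
  have hk1 : (1:ℝ) ≤ (k:ℝ) := by exact_mod_cast hk
  set L : ℝ := Real.log (1+θ) with hL
  set w : ℝ := (1+θ)⁻¹ with hw
  have e1 : θ^2/(2*(C₀+1)^2) = θ^2 * ((C₀+1)^2)⁻¹ / 2 := by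
    have : (C₀+1)^2 ≠ 0 := by positivity
    field_simp
  rw [e1] at hg1
  constructor
  · rw [Real.exp_le_exp,
      show (k:ℝ) * θ^2 / (4*(C₀+1)^2) = (k:ℝ)/2 * (θ^2 * ((C₀+1)^2)⁻¹ / 2) from by
        have : (C₀+1)^2 ≠ 0 := by positivity
        field_simp
        ring]
    have hA : (k:ℝ)/2 * (θ*w + θ^2 * ((C₀+1)^2)⁻¹ / 2) ≤ (k:ℝ)/2 * L := by
      apply mul_le_mul_of_nonneg_left _ (by positivity)
      linarith
    have hB : (S - (k:ℝ)) * (θ*w) ≤ c * (θ*w) :=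
      mul_le_mul_of_nonneg_right (by linarith) (by positivity)
    have hC : c * (θ*w) ≤ c * θ := by
      apply mul_le_mul_of_nonneg_left _ hc.le
      nlinarith
    linarith [hA, hB, hC]
  · rw [Real.exp_le_exp]
    have hA : (k:ℝ)/2 * L ≤ (k:ℝ)/2 * (θ*w + θ^2/2) := by
      apply mul_le_mul_of_nonneg_left _ (by positivity)
      linarith
    have hB : ((k:ℝ) - S) * (θ*w) ≤ c * (θ*w) :=
      mul_le_mul_of_nonneg_right (by linarith) (by positivity)
    have hC : c * (θ*w) ≤ c * θ := by
      apply mul_le_mul_of_nonneg_left _ hc.le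
      nlinarith
    linarith [hA, hB, hC]
end

section
/- Let λ be a σ-finite measure on a measurable space, and let P₁ and P₂ be probability measures with densities f₁ and f₂ with respect to λ. Let S be a measurable set and let r ∈ [0,1] be such that r·f₁(z) ≤ f₂(z) and r·f₂(z) ≤ f₁(z) for λ-almost every z ∈ S. Then d_TV(P₁,P₂) ≤ 1 − (r/(1+r)) · (P₁(S) + P₂(S)). -/
open MeasureTheory
open scoped ENNReal NNReal

noncomputable def tvDist {α : Type*} [MeasurableSpace α] (μ ν : Measure α) : ℝ :=
  ⨆ s : {s : Set α // MeasurableSet s}, |(μ s.1).toReal - (ν s.1).toReal|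

lemma aux_le {α : Type*} [MeasurableSpace α] (lam : Measure α)
    (f g : α → ℝ≥0∞) (hf : Measurable f) (hg : Measurable g)
    (hfint : ∫⁻ z, f z ∂lam = 1) (s : Set α)
    (I : ℝ≥0∞) (hImin : I ≤ ∫⁻ z, min (f z) (g z) ∂lam) :
    ∫⁻ z in s, f z ∂lam ≤ ∫⁻ z in s, g z ∂lam + (1 - I) := by
  set m : α → ℝ≥0∞ := fun z => min (f z) (g z) with hm_def
  have hm : Measurable m := hf.min hg
  have hmle : ∀ z, m z ≤ f z := fun z => min_le_left _ _
  have hmint_ne : ∫⁻ z, m z ∂lam ≠ ∞ := by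
    refine ne_top_of_le_ne_top ?_ (lintegral_mono hmle)
    rw [hfint]; exact ENNReal.one_ne_top
  have h1 : ∫⁻ z in s, f z ∂lam
      = ∫⁻ z in s, (f z - m z) ∂lam + ∫⁻ z in s, m z ∂lam := by
    rw [← lintegral_add_right _ hm]
    refine lintegral_congr fun z => ?_
    exact (tsub_add_cancel_of_le (hmle z)).symm
  have h2 : ∫⁻ z in s, (f z - m z) ∂lam ≤ 1 - I := by
    calc ∫⁻ z in s, (f z - m z) ∂lam ≤ ∫⁻ z, (f z - m z) ∂lam :=
          setLIntegral_le_lintegral _ _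
      _ = ∫⁻ z, f z ∂lam - ∫⁻ z, m z ∂lam :=
          lintegral_sub hm hmint_ne (Filter.Eventually.of_forall hmle)
      _ ≤ 1 - I := by rw [hfint]; exact tsub_le_tsub_left hImin 1
  have h3 : ∫⁻ z in s, m z ∂lam ≤ ∫⁻ z in s, g z ∂lam :=
    lintegral_mono fun z => min_le_right _ _
  rw [h1, add_comm]
  exact add_le_add h3 h2

lemma aux_pt (c a b : ℝ≥0∞) (hc : c ≠ ∞) (h : c * b ≤ a) :
    c / (1 + c) * (a + b) ≤ a := by
  have h10 : (1 : ℝ≥0∞) + c ≠ 0 := by simp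
  have h1t : (1 : ℝ≥0∞) + c ≠ ∞ := by
    simp [ENNReal.add_ne_top, hc]
  have key : c * (a + b) ≤ a * (1 + c) := by
    calc c * (a + b) = c * a + c * b := by ring
      _ ≤ c * a + a := by gcongr
      _ = a * (1 + c) := by ring
  calc c / (1 + c) * (a + b) = c * (a + b) * (1 + c)⁻¹ := by
        rw [ENNReal.div_eq_inv_mul]; ring
    _ ≤ a * (1 + c) * (1 + c)⁻¹ := by
        gcongr
    _ = a := by
        rw [mul_assoc, ENNReal.mul_inv_cancel h10 h1t, mul_one]

/-- If `P₁, P₂` are probability measures with densities `f₁, f₂` with respect to a σ-finite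
measure `λ`, `S` is a measurable set, and `r ∈ [0,1]` satisfies `r·f₁ ≤ f₂` and `r·f₂ ≤ f₁`
λ-a.e. on `S`, then `d_TV(P₁,P₂) ≤ 1 − (r/(1+r))·(P₁(S) + P₂(S))`. -/
theorem stmt10 {α : Type*} [MeasurableSpace α] (lam : Measure α) [SigmaFinite lam]
    (f₁ f₂ : α → ℝ≥0∞) (hf₁ : Measurable f₁) (hf₂ : Measurable f₂)
    (P₁ P₂ : Measure α) (hP₁ : P₁ = lam.withDensity f₁) (hP₂ : P₂ = lam.withDensity f₂)
    [IsProbabilityMeasure P₁] [IsProbabilityMeasure P₂]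
    (S : Set α) (hS : MeasurableSet S)
    (r : ℝ) (hr0 : 0 ≤ r) (hr1 : r ≤ 1)
    (hae : ∀ᵐ z ∂lam, z ∈ S →
      ENNReal.ofReal r * f₁ z ≤ f₂ z ∧ ENNReal.ofReal r * f₂ z ≤ f₁ z) :
    tvDist P₁ P₂ ≤ 1 - r / (1 + r) * ((P₁ S).toReal + (P₂ S).toReal) := by
  set c : ℝ≥0∞ := ENNReal.ofReal r with hc_def
  have hc : c ≠ ∞ := ENNReal.ofReal_ne_top
  set I : ℝ≥0∞ := ∫⁻ z, min (f₁ z) (f₂ z) ∂lam with hI_def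
  have hf₁int : ∫⁻ z, f₁ z ∂lam = 1 := by
    have := measure_univ (μ := P₁)
    rwa [hP₁, withDensity_apply _ MeasurableSet.univ, setLIntegral_univ] at this
  have hf₂int : ∫⁻ z, f₂ z ∂lam = 1 := by
    have := measure_univ (μ := P₂)
    rwa [hP₂, withDensity_apply _ MeasurableSet.univ, setLIntegral_univ] at this
  have hI1 : I ≤ 1 := by
    rw [hI_def, ← hf₁int]
    exact lintegral_mono fun z => min_le_left _ _
  have hIne : I ≠ ∞ := ne_top_of_le_ne_top ENNReal.one_ne_top hI1
  -- step 1 : tvDist ≤ 1 - I.toReal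
  have step1 : tvDist P₁ P₂ ≤ 1 - I.toReal := by
    refine ciSup_le fun s => ?_
    have hs := s.2
    have hb1 : P₁ s.1 ≤ P₂ s.1 + (1 - I) := by
      rw [hP₁, hP₂, withDensity_apply _ hs, withDensity_apply _ hs]
      exact aux_le lam f₁ f₂ hf₁ hf₂ hf₁int s.1 I le_rfl
    have hb2 : P₂ s.1 ≤ P₁ s.1 + (1 - I) := by
      rw [hP₁, hP₂, withDensity_apply _ hs, withDensity_apply _ hs]
      refine aux_le lam f₂ f₁ hf₂ hf₁ hf₂int s.1 I ?_
      rw [hI_def]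
      exact le_of_eq (lintegral_congr fun z => (min_comm _ _))
    have hne1 : P₁ s.1 ≠ ∞ := measure_ne_top _ _
    have hne2 : P₂ s.1 ≠ ∞ := measure_ne_top _ _
    have h1I : (1 - I).toReal = 1 - I.toReal := by
      rw [ENNReal.toReal_sub_of_le hI1 ENNReal.one_ne_top, ENNReal.toReal_one]
    rw [abs_le]
    constructor
    · have := ENNReal.toReal_mono (by finiteness) hb2
      rw [ENNReal.toReal_add hne1 (by finiteness), h1I] at this
      linarith
    · have := ENNReal.toReal_mono (by finiteness) hb1
      rw [ENNReal.toReal_add hne2 (by finiteness), h1I] at this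
      linarith
  -- step 2 : r/(1+r) * (P₁ S + P₂ S) ≤ I.toReal
  have step2 : r / (1 + r) * ((P₁ S).toReal + (P₂ S).toReal) ≤ I.toReal := by
    have hptwise : ∀ z, z ∈ S → (c * f₁ z ≤ f₂ z ∧ c * f₂ z ≤ f₁ z) →
        c / (1 + c) * (f₁ z + f₂ z) ≤ min (f₁ z) (f₂ z) := by
      intro z hz ⟨h1, h2⟩
      refine le_min (aux_pt c _ _ hc h2) ?_
      have := aux_pt c (f₂ z) (f₁ z) hc h1
      calc c / (1 + c) * (f₁ z + f₂ z) = c / (1 + c) * (f₂ z + f₁ z) := by ring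
        _ ≤ f₂ z := this
    have hint : ∫⁻ z in S, c / (1 + c) * (f₁ z + f₂ z) ∂lam
        ≤ ∫⁻ z in S, min (f₁ z) (f₂ z) ∂lam := by
      refine lintegral_mono_ae ?_
      rw [ae_restrict_iff' hS]
      filter_upwards [hae] with z h hz
      exact hptwise z hz (h hz)
    have hlhs : ∫⁻ z in S, c / (1 + c) * (f₁ z + f₂ z) ∂lam
        = c / (1 + c) * (P₁ S + P₂ S) := by
      rw [lintegral_const_mul _ (show Measurable fun z => f₁ z + f₂ z from hf₁.add hf₂), lintegral_add_left hf₁,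
        hP₁, hP₂, withDensity_apply _ hS, withDensity_apply _ hS]
    have hrhs : ∫⁻ z in S, min (f₁ z) (f₂ z) ∂lam ≤ I :=
      setLIntegral_le_lintegral _ _
    have hEN : c / (1 + c) * (P₁ S + P₂ S) ≤ I := by
      rw [← hlhs]; exact hint.trans hrhs
    have := ENNReal.toReal_mono hIne hEN
    have heq : (c / (1 + c) * (P₁ S + P₂ S)).toReal
        = r / (1 + r) * ((P₁ S).toReal + (P₂ S).toReal) := by
      rw [ENNReal.toReal_mul, ENNReal.toReal_div,
        ENNReal.toReal_add (measure_ne_top _ _) (measure_ne_top _ _)]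
      congr 1
      rw [hc_def]
      rw [ENNReal.toReal_add ENNReal.one_ne_top ENNReal.ofReal_ne_top]
      simp [ENNReal.toReal_ofReal hr0]
    rwa [heq] at this
  have hI01 : I.toReal ≤ 1 := by
    have := ENNReal.toReal_mono ENNReal.one_ne_top hI1
    simpa using this
  linarith
end
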